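/- Let (X,d) be a pointed discrete metric space and m ≥ 0. A function f : X → S^m is Higson sublinear if and only if it is the uniform limit of functions g : X → S^m such that the functions g' : X → ℝ^{m+1}, g'(x) = |x|·g(x), are Lipschitz; that is, if and only if for every δ > 0 there exists g : X → S^m with sup_{x∈X} ‖f(x) − g(x)‖ ≤ δ and g' Lipschitz. -/

import Mathlib

open Filter


/-- A function `s : [0,∞) → [0,∞)` is *asymptotically sublinear* if it is continuous,
nonnegative on `[0,∞)`, and for each non-constant linear function `r ↦ a·r + c`
(`a > 0`, `c ≥ 0`) there is `M ≥ 0` with `s(r) ≤ a·r + c + M` for all `r ≥ 0`. -/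
def AsympSublinear (s : ℝ → ℝ) : Prop :=
  ContinuousOn s (Set.Ici 0) ∧ (∀ r : ℝ, 0 ≤ r → 0 ≤ s r) ∧
  ∀ a : ℝ, 0 < a → ∀ c : ℝ, 0 ≤ c → ∃ M : ℝ, 0 ≤ M ∧
    ∀ r : ℝ, 0 ≤ r → s r ≤ a * r + c + M

/-- `f : X → Y` is *Higson sublinear* (with base point `x₀`) if for every asymptotically
sublinear `s` and all sequences `xₙ, yₙ → ∞` with `d(xₙ,yₙ) ≤ s(|xₙ|)`, one has
`d(f xₙ, f yₙ) → 0`. -/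
def HigsonSublinear {X Y : Type*} [MetricSpace X] [MetricSpace Y] (x₀ : X) (f : X → Y) :
    Prop :=
  ∀ s : ℝ → ℝ, AsympSublinear s →
    ∀ x y : ℕ → X,
      Filter.Tendsto (fun n => dist (x n) x₀) Filter.atTop Filter.atTop →
      Filter.Tendsto (fun n => dist (y n) x₀) Filter.atTop Filter.atTop →
      (∀ n, dist (x n) (y n) ≤ s (dist (x n) x₀)) →
      Filter.Tendsto (fun n => dist (f (x n)) (f (y n))) Filter.atTop (nhds 0)

/-- A function between metric spaces is *Lipschitz* if it is `λ`-Lipschitz for some `λ ≥ 0`. -/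
def LipFun {X Y : Type*} [MetricSpace X] [MetricSpace Y] (f : X → Y) : Prop :=
  ∃ lam : ℝ, 0 ≤ lam ∧ ∀ x y, dist (f x) (f y) ≤ lam * dist x y

/-- on a pointed discrete metric space, `f : X → Sᵐ` is Higson sublinear iff
for every `δ > 0` there is `g : X → Sᵐ` with `‖f x − g x‖ ≤ δ` for all `x` and
`g'(x) = |x|·g(x)` Lipschitz. -/

private lemma abs_coord_le {k : ℕ} (v : EuclideanSpace ℝ (Fin k)) (j : Fin k) :
    |v j| ≤ ‖v‖ := by
  rw [EuclideanSpace.norm_eq]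
  have h1 : |v j| = Real.sqrt (‖v j‖ ^ 2) := by
    rw [Real.sqrt_sq_eq_abs]; simp [abs_abs, Real.norm_eq_abs]
  rw [h1]
  apply Real.sqrt_le_sqrt
  exact Finset.single_le_sum (f := fun i => ‖v i‖ ^ 2) (fun i _ => by positivity) (Finset.mem_univ j)

private lemma norm_le_sqrt_mul {k : ℕ} (v : EuclideanSpace ℝ (Fin k)) (b : ℝ) (hb : 0 ≤ b)
    (h : ∀ j, |v j| ≤ b) : ‖v‖ ≤ Real.sqrt k * b := by
  rw [EuclideanSpace.norm_eq]
  have : ∑ i, ‖v i‖ ^ 2 ≤ (k : ℝ) * b ^ 2 := by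
    calc ∑ i, ‖v i‖ ^ 2 ≤ ∑ _i : Fin k, b ^ 2 := by
          apply Finset.sum_le_sum
          intro i _
          have := h i
          rw [Real.norm_eq_abs]
          nlinarith [abs_nonneg (v i)]
      _ = (k : ℝ) * b ^ 2 := by simp [Finset.sum_const, nsmul_eq_mul]
  calc Real.sqrt (∑ i, ‖v i‖ ^ 2) ≤ Real.sqrt ((k : ℝ) * b ^ 2) := Real.sqrt_le_sqrt this
    _ = Real.sqrt k * b := by
        rw [Real.sqrt_mul (by positivity), Real.sqrt_sq hb]

/-- normalization estimate -/
private lemma normalize_close {E : Type*} [NormedAddCommGroup E] [NormedSpace ℝ E]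
    (u v : E) (hu : 0 < ‖u‖) (hv : 0 < ‖v‖) :
    ‖‖u‖⁻¹ • u - ‖v‖⁻¹ • v‖ ≤ 2 * ‖u - v‖ / ‖u‖ := by
  have h1 : ‖‖u‖⁻¹ • u - ‖u‖⁻¹ • v‖ = ‖u - v‖ / ‖u‖ := by
    rw [← smul_sub, norm_smul, Real.norm_eq_abs, abs_of_pos (inv_pos.mpr hu),
      inv_mul_eq_div]
  have h2 : ‖‖u‖⁻¹ • v - ‖v‖⁻¹ • v‖ ≤ ‖u - v‖ / ‖u‖ := by
    rw [← sub_smul, norm_smul, Real.norm_eq_abs]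
    have : |‖u‖⁻¹ - ‖v‖⁻¹| = |‖v‖ - ‖u‖| / (‖u‖ * ‖v‖) := by
      rw [show ‖u‖⁻¹ - ‖v‖⁻¹ = (‖v‖ - ‖u‖) * (‖u‖ * ‖v‖)⁻¹ by field_simp,
        abs_mul, abs_of_pos (inv_pos.mpr (mul_pos hu hv)), div_eq_mul_inv]
    rw [this]
    have hnn : |‖v‖ - ‖u‖| ≤ ‖u - v‖ := by
      rw [abs_sub_comm]
      exact abs_norm_sub_norm_le u v
    rw [div_mul_eq_mul_div, div_le_div_iff₀ (by positivity) hu]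
    nlinarith [mul_le_mul_of_nonneg_right (mul_le_mul_of_nonneg_right hnn (le_of_lt hv))
      (le_of_lt hu)]
  calc ‖‖u‖⁻¹ • u - ‖v‖⁻¹ • v‖
      ≤ ‖‖u‖⁻¹ • u - ‖u‖⁻¹ • v‖ + ‖‖u‖⁻¹ • v - ‖v‖⁻¹ • v‖ :=
        norm_sub_le_norm_sub_add_norm_sub _ _ _
    _ ≤ ‖u - v‖ / ‖u‖ + ‖u - v‖ / ‖u‖ := by rw [h1]; exact add_le_add le_rfl h2
    _ = 2 * ‖u - v‖ / ‖u‖ := by ring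


private lemma higson_unif {X Y : Type*} [MetricSpace X] [MetricSpace Y] (x₀ : X)
    (f : X → Y) (hf : HigsonSublinear x₀ f) {δ : ℝ} (hδ : 0 < δ) :
    ∃ a R : ℝ, 0 < a ∧ a ≤ 1 ∧ 1 ≤ R ∧
      ∀ x y : X, R ≤ dist y x₀ → dist x y ≤ a * dist y x₀ → dist (f x) (f y) ≤ δ := by
  by_contra hcon
  push_neg at hcon
  have key : ∀ n : ℕ, ∃ x y : X, ((n : ℝ) + 2) ≤ dist y x₀ ∧
      dist x y ≤ (1 / ((n : ℝ) + 2)) * dist y x₀ ∧ δ < dist (f x) (f y) := by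
    intro n
    have h2 : (0 : ℝ) < (n : ℝ) + 2 := by positivity
    exact hcon (1 / ((n : ℝ) + 2)) ((n : ℝ) + 2) (by positivity)
      (by rw [div_le_one h2]; linarith) (by linarith)
  choose x y h1 h2 h3 using key
  set r : ℕ → ℝ := fun n => dist (x n) x₀ with hr
  have hn2 : ∀ n : ℕ, (0 : ℝ) < (n : ℝ) + 2 := fun n => by positivity
  have hd' : ∀ n : ℕ, dist (x n) (y n) * ((n:ℝ) + 2) ≤ dist (y n) x₀ := by
    intro n
    have h2n := hn2 n
    have := h2 n
    rw [one_div, inv_mul_eq_div, le_div_iff₀ h2n] at this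
    exact this
  have hr1 : ∀ n : ℕ, (n : ℝ) + 1 ≤ r n := by
    intro n
    have htri : dist (y n) x₀ ≤ dist (x n) (y n) + r n := by
      rw [hr]; rw [dist_comm (x n) (y n)]; exact dist_triangle _ _ _
    have ha := h1 n
    have hb := hd' n
    have h2n := hn2 n
    have hm := mul_le_mul_of_nonneg_left htri (le_of_lt h2n)
    have hm2 := mul_le_mul_of_nonneg_left ha (show (0:ℝ) ≤ (n:ℝ) + 1 by positivity)
    nlinarith [h2n, dist_nonneg (x := x n) (y := y n)]
  have hrpos : ∀ n, (0 : ℝ) < r n := fun n => lt_of_lt_of_le (by positivity) (hr1 n)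
  have hr1' : ∀ n, (1:ℝ) ≤ r n := fun n =>
    le_trans (by linarith [Nat.cast_nonneg (α := ℝ) n]) (hr1 n)
  have hd2 : ∀ n, dist (x n) (y n) ≤ 2 * r n / ((n:ℝ) + 2) := by
    intro n
    have htri : dist (y n) x₀ ≤ dist (x n) (y n) + r n := by
      rw [hr]; rw [dist_comm (x n) (y n)]; exact dist_triangle _ _ _
    have hb := hd' n
    have h2n := hn2 n
    rw [le_div_iff₀ h2n]
    have hnd : (0:ℝ) ≤ (n:ℝ) * dist (x n) (y n) :=
      mul_nonneg (Nat.cast_nonneg n) dist_nonneg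
    nlinarith [dist_nonneg (x := x n) (y := y n)]
  -- the bump functions
  set φ : ℕ → ℝ → ℝ := fun n t => (2 / ((n:ℝ) + 2)) * min 1 (max 0 (2 - t / r n)) with hφ
  have φ_nonneg : ∀ n t, 0 ≤ φ n t := by
    intro n t
    apply mul_nonneg (by positivity)
    rcases le_total (1:ℝ) (max 0 (2 - t / r n)) with h | h
    · rw [min_eq_left h]; norm_num
    · rw [min_eq_right h]; exact le_max_left _ _
  have φ_le : ∀ n t, φ n t ≤ 2 / ((n:ℝ) + 2) := by
    intro n t
    have hmin : min 1 (max 0 (2 - t / r n)) ≤ 1 := min_le_left _ _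
    have h0 : (0:ℝ) ≤ 2 / ((n:ℝ) + 2) := by positivity
    calc φ n t ≤ (2 / ((n:ℝ) + 2)) * 1 := mul_le_mul_of_nonneg_left hmin h0
      _ = 2 / ((n:ℝ) + 2) := mul_one _
  have φ_le1 : ∀ n t, φ n t ≤ 1 := by
    intro n t
    refine le_trans (φ_le n t) ?_
    rw [div_le_one (hn2 n)]; linarith [Nat.cast_nonneg (α := ℝ) n]
  have φ_lip : ∀ n t t', |φ n t - φ n t'| ≤ |t - t'| := by
    intro n t t'
    rw [hφ]
    simp only
    rw [← mul_sub, abs_mul]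
    have hA : |(2 - t / r n) - (2 - t' / r n)| = |t - t'| / r n := by
      rw [show (2 - t / r n) - (2 - t' / r n) = (t' - t)/ r n by ring]
      rw [abs_div, abs_of_pos (hrpos n), abs_sub_comm t' t]
    have h1' : |min 1 (max 0 (2 - t / r n)) - min 1 (max 0 (2 - t' / r n))| ≤ |t - t'| / r n := by
      calc |min 1 (max 0 (2 - t / r n)) - min 1 (max 0 (2 - t' / r n))|
          ≤ max |(1:ℝ) - 1| |max 0 (2 - t / r n) - max 0 (2 - t' / r n)| :=
            abs_min_sub_min_le_max _ _ _ _
        _ ≤ |(2 - t / r n) - (2 - t' / r n)| := by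
            apply max_le
            · simpa using abs_nonneg ((2 - t / r n) - (2 - t' / r n))
            · refine le_trans (abs_max_sub_max_le_max _ _ _ _) ?_
              apply max_le
              · simpa using abs_nonneg ((2 - t / r n) - (2 - t' / r n))
              · exact le_refl _
        _ = |t - t'| / r n := hA
    have ha : |2 / ((n:ℝ) + 2)| ≤ 1 := by
      rw [abs_of_pos (by positivity), div_le_one (hn2 n)]
      linarith [Nat.cast_nonneg (α := ℝ) n]
    calc |2 / ((n:ℝ) + 2)| * |min 1 (max 0 (2 - t / r n)) - min 1 (max 0 (2 - t' / r n))|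
        ≤ 1 * (|t - t'| / r n) := by
          apply mul_le_mul ha h1' (abs_nonneg _) zero_le_one
      _ ≤ |t - t'| := by
          rw [one_mul, div_le_iff₀ (hrpos n)]
          nlinarith [abs_nonneg (t - t'), hr1' n]
  have φ_zero : ∀ n t, 2 * r n ≤ t → φ n t = 0 := by
    intro n t ht
    rw [hφ]; simp only
    have : 2 - t / r n ≤ 0 := by
      rw [sub_nonpos, le_div_iff₀ (hrpos n)]; linarith
    rw [max_eq_left this, min_eq_right (by norm_num : (0:ℝ) ≤ 1), mul_zero]
  have φ_at : ∀ n, φ n (r n) = 2 / ((n:ℝ) + 2) := by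
    intro n
    rw [hφ]; simp only
    rw [div_self (ne_of_gt (hrpos n))]
    norm_num
  -- the sup
  set h : ℝ → ℝ := fun t => ⨆ n, φ n t with hh
  have hbdd : ∀ t, BddAbove (Set.range fun n => φ n t) := by
    intro t
    exact ⟨1, by rintro v ⟨n, rfl⟩; exact φ_le1 n t⟩
  have h_ge : ∀ n t, φ n t ≤ h t := fun n t => le_ciSup (hbdd t) n
  have h_nonneg : ∀ t, 0 ≤ h t := fun t => le_trans (φ_nonneg 0 t) (h_ge 0 t)
  have h_le1 : ∀ t, h t ≤ 1 := fun t => ciSup_le fun n => φ_le1 n t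
  have h_lip : ∀ t t', |h t - h t'| ≤ |t - t'| := by
    intro t t'
    rw [abs_sub_le_iff]
    constructor
    · rw [sub_le_iff_le_add]
      apply ciSup_le
      intro n
      have := φ_lip n t t'
      have h2' := h_ge n t'
      rw [abs_sub_le_iff] at this
      linarith [this.1]
    · rw [sub_le_iff_le_add]
      apply ciSup_le
      intro n
      have := φ_lip n t t'
      have h2' := h_ge n t
      rw [abs_sub_le_iff] at this
      linarith [this.2]
  have h_small : ∀ a : ℝ, 0 < a → ∃ T : ℝ, 0 ≤ T ∧ ∀ t, T ≤ t → h t ≤ a := by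
    intro a ha
    obtain ⟨K, hK⟩ := exists_nat_gt (2 / a)
    have hne : (Finset.range (K + 1)).Nonempty := ⟨0, by simp⟩
    set T := 2 * ((Finset.range (K + 1)).sup' hne r) with hT
    refine ⟨max T 0, le_max_right _ _, ?_⟩
    intro t ht
    apply ciSup_le
    intro n
    rcases le_or_gt n K with hnK | hnK
    · have hmem : n ∈ Finset.range (K + 1) := Finset.mem_range.mpr (by omega)
      have : r n ≤ (Finset.range (K + 1)).sup' hne r := Finset.le_sup' r hmem
      have h2rn : 2 * r n ≤ t := by
        have : T ≤ t := le_trans (le_max_left _ _) ht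
        rw [hT] at this; linarith
      rw [φ_zero n t h2rn]; exact le_of_lt ha
    · refine le_trans (φ_le n t) ?_
      have hK2 : (2:ℝ) / a < K := hK
      have hKn : (K:ℝ) ≤ (n:ℝ) := by exact_mod_cast le_of_lt hnK
      rw [div_le_iff₀ (hn2 n)]
      have h2a : 2 / a < (n:ℝ) + 2 := by linarith
      rw [div_lt_iff₀ ha] at h2a
      nlinarith
  -- s
  set s : ℝ → ℝ := fun t => t * h t with hs
  have hS : AsympSublinear s := by
    refine ⟨?_, ?_, ?_⟩
    · have : Continuous h := by
        apply LipschitzWith.continuous (K := 1)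
        apply LipschitzWith.of_dist_le_mul
        intro t t'
        rw [Real.dist_eq, Real.dist_eq]
        simpa using h_lip t t'
      exact (continuous_id.mul this).continuousOn
    · intro t ht; exact mul_nonneg ht (h_nonneg t)
    · intro a ha c hc
      obtain ⟨T, hT0, hT⟩ := h_small a ha
      refine ⟨T, hT0, ?_⟩
      intro t ht
      show t * h t ≤ a * t + c + T
      rcases le_or_gt T t with hTt | hTt
      · have h1' : h t ≤ a := hT t hTt
        nlinarith
      · have h1' : t * h t ≤ t * 1 := mul_le_mul_of_nonneg_left (h_le1 t) ht
        nlinarith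
  -- apply Higson sublinearity
  have hxin : Tendsto (fun n => dist (x n) x₀) atTop atTop := by
    apply tendsto_atTop_mono hr1
    exact tendsto_atTop_add_const_right _ 1 tendsto_natCast_atTop_atTop
  have hyin : Tendsto (fun n => dist (y n) x₀) atTop atTop := by
    apply tendsto_atTop_mono h1
    exact tendsto_atTop_add_const_right _ 2 tendsto_natCast_atTop_atTop
  have hds : ∀ n, dist (x n) (y n) ≤ s (dist (x n) x₀) := by
    intro n
    have hha : 2 / ((n:ℝ) + 2) ≤ h (r n) := by
      rw [← φ_at n]; exact h_ge n (r n)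
    have hsn : 2 * r n / ((n:ℝ) + 2) ≤ s (r n) := by
      show _ ≤ r n * h (r n)
      rw [div_le_iff₀ (hn2 n)]
      rw [div_le_iff₀ (hn2 n)] at hha
      nlinarith [hrpos n]
    exact le_trans (hd2 n) hsn
  have := hf s hS x y hxin hyin hds
  have hev : ∀ᶠ n in atTop, dist (f (x n)) (f (y n)) < δ :=
    this.eventually (gt_mem_nhds hδ)
  obtain ⟨n, hn⟩ := hev.exists
  exact absurd (h3 n) (not_lt.mpr (le_of_lt hn))

private lemma backward_dir {X : Type*} [MetricSpace X] (x₀ : X) (m : ℕ)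
    (f : X → EuclideanSpace ℝ (Fin (m + 1))) (hf1 : ∀ x, ‖f x‖ = 1)
    (hg : ∀ δ > (0 : ℝ), ∃ g : X → EuclideanSpace ℝ (Fin (m + 1)),
        (∀ x, ‖g x‖ = 1) ∧ (∀ x, ‖f x - g x‖ ≤ δ) ∧
        LipFun (fun x : X => dist x x₀ • g x)) :
    HigsonSublinear x₀ f := by
  intro s hs x y hx hy hd
  rw [Metric.tendsto_atTop]
  intro ε hε
  obtain ⟨g, hg1, hgf, lam, hlam0, hlam⟩ := hg (ε / 8) (by positivity)
  obtain ⟨_, hsnn, hlin⟩ := hs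
  obtain ⟨M, hM0, hM⟩ := hlin (ε / (8 * (lam + 1))) (by positivity) 0 le_rfl
  set T : ℝ := max 1 (8 * (lam + 1) * M / ε) with hT
  obtain ⟨N, hN⟩ := (hx.eventually_ge_atTop T).exists_forall_of_atTop
  refine ⟨N, fun n hn => ?_⟩
  set p := dist (x n) x₀ with hp
  have hpT : T ≤ p := hN n hn
  have hp1 : (1:ℝ) ≤ p := le_trans (le_max_left _ _) hpT
  have hppos : (0:ℝ) < p := lt_of_lt_of_le zero_lt_one hp1
  have hpM : 8 * (lam + 1) * M / ε ≤ p := le_trans (le_max_right _ _) hpT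
  have hdn : dist (x n) (y n) ≤ s p := hd n
  have hsp : s p ≤ ε / (8 * (lam + 1)) * p + 0 + M := hM p (le_of_lt hppos)
  have hq : |dist (y n) x₀ - p| ≤ dist (x n) (y n) := by
    rw [abs_sub_comm, hp]
    exact abs_dist_sub_le _ _ _
  -- key estimate on ‖g xₙ - g yₙ‖
  have hkey : p * ‖g (x n) - g (y n)‖ ≤ (lam + 1) * s p := by
    have e1 : ‖p • g (x n) - p • g (y n)‖ = p * ‖g (x n) - g (y n)‖ := by
      rw [← smul_sub, norm_smul, Real.norm_eq_abs, abs_of_pos hppos]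
    have e2 : ‖p • g (x n) - dist (y n) x₀ • g (y n)‖ ≤ lam * dist (x n) (y n) := by
      have := hlam (x n) (y n)
      rw [dist_eq_norm] at this
      exact this
    have e3 : ‖dist (y n) x₀ • g (y n) - p • g (y n)‖ ≤ dist (x n) (y n) := by
      rw [← sub_smul, norm_smul, Real.norm_eq_abs, hg1, mul_one]
      exact hq
    calc p * ‖g (x n) - g (y n)‖ = ‖p • g (x n) - p • g (y n)‖ := e1.symm
      _ ≤ ‖p • g (x n) - dist (y n) x₀ • g (y n)‖ +
          ‖dist (y n) x₀ • g (y n) - p • g (y n)‖ := norm_sub_le_norm_sub_add_norm_sub _ _ _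
      _ ≤ lam * dist (x n) (y n) + dist (x n) (y n) := add_le_add e2 e3
      _ = (lam + 1) * dist (x n) (y n) := by ring
      _ ≤ (lam + 1) * s p := by
          apply mul_le_mul_of_nonneg_left hdn (by linarith)
  have hgg : ‖g (x n) - g (y n)‖ ≤ ε / 4 := by
    have hMp : (lam + 1) * M ≤ ε / 8 * p := by
      rw [div_le_iff₀ hε] at hpM
      nlinarith
    have hchain : p * ‖g (x n) - g (y n)‖ ≤ ε / 4 * p := by
      have : (lam + 1) * s p ≤ (lam + 1) * (ε / (8 * (lam + 1)) * p + 0 + M) :=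
        mul_le_mul_of_nonneg_left hsp (by linarith)
      have hsimp : (lam + 1) * (ε / (8 * (lam + 1)) * p) = ε / 8 * p := by
        field_simp
      nlinarith
    nlinarith
  have hfin : dist (f (x n)) (f (y n)) ≤ ε / 2 := by
    rw [dist_eq_norm]
    calc ‖f (x n) - f (y n)‖
        ≤ ‖f (x n) - g (x n)‖ + ‖g (x n) - g (y n)‖ + ‖g (y n) - f (y n)‖ :=
          by
          have := norm_sub_le_norm_sub_add_norm_sub (f (x n)) (g (x n)) (f (y n))
          calc ‖f (x n) - f (y n)‖ ≤ ‖f (x n) - g (x n)‖ + ‖g (x n) - f (y n)‖ :=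
                norm_sub_le_norm_sub_add_norm_sub _ _ _
            _ ≤ ‖f (x n) - g (x n)‖ + (‖g (x n) - g (y n)‖ + ‖g (y n) - f (y n)‖) := by
                gcongr
                exact norm_sub_le_norm_sub_add_norm_sub _ _ _
            _ = _ := by ring
      _ ≤ ε / 8 + ε / 4 + ε / 8 := by
          refine add_le_add (add_le_add (hgf _) hgg) ?_
          rw [norm_sub_rev]
          exact hgf _
      _ = ε / 2 := by ring
  rw [Real.dist_eq, sub_zero, abs_of_nonneg dist_nonneg]
  linarith

set_option maxHeartbeats 2000000 in
private lemma forward_dir {X : Type*} [MetricSpace X] (x₀ : X)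
    (hdisc : ∃ ε > 0, ∀ x y : X, x ≠ y → ε ≤ dist x y) (m : ℕ)
    (f : X → EuclideanSpace ℝ (Fin (m + 1))) (hf1 : ∀ x, ‖f x‖ = 1)
    (hf : HigsonSublinear x₀ f) :
    ∀ δ > (0 : ℝ), ∃ g : X → EuclideanSpace ℝ (Fin (m + 1)),
      (∀ x, ‖g x‖ = 1) ∧ (∀ x, ‖f x - g x‖ ≤ δ) ∧
      LipFun (fun x : X => dist x x₀ • g x) := by
  obtain ⟨ε, hε, hsep⟩ := hdisc
  intro δ₀' hδ₀'
  -- reduce to small δ₀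
  set δ₀ : ℝ := min δ₀' (1/2) with hδ₀def
  have hδ₀pos : 0 < δ₀ := lt_min hδ₀' (by norm_num)
  have hδ₀half : δ₀ ≤ 1/2 := min_le_right _ _
  have hδ₀le : δ₀ ≤ δ₀' := min_le_left _ _
  suffices hsuf : ∃ g : X → EuclideanSpace ℝ (Fin (m + 1)),
      (∀ x, ‖g x‖ = 1) ∧ (∀ x, ‖f x - g x‖ ≤ δ₀) ∧
      LipFun (fun x : X => dist x x₀ • g x) by
    obtain ⟨g, hg1, hg2, hg3⟩ := hsuf
    exact ⟨g, hg1, fun x => le_trans (hg2 x) hδ₀le, hg3⟩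
  -- constants
  set sq : ℝ := Real.sqrt (m + 1) with hsqdef
  have hsq1 : 1 ≤ sq := by
    have h1 := Real.sq_sqrt (show (0:ℝ) ≤ (m:ℝ) + 1 by positivity)
    have h2 := Real.sqrt_nonneg ((m:ℝ) + 1)
    rw [hsqdef]
    nlinarith [Nat.cast_nonneg (α := ℝ) m]
  have hsqpos : 0 < sq := lt_of_lt_of_le zero_lt_one hsq1
  set δ₁ : ℝ := δ₀ / (8 * sq) with hδ₁def
  have hδ₁pos : 0 < δ₁ := by positivity
  have hδ₁le : δ₁ ≤ 1 / 16 := by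
    rw [hδ₁def, div_le_iff₀ (by positivity)]
    nlinarith
  obtain ⟨a, R, hapos, ha1, hR1, hctrl⟩ := higson_unif x₀ f hf hδ₁pos
  set lam : ℝ := 3 + 2 / a with hlamdef
  have hlam3 : 3 ≤ lam := by
    rw [hlamdef]; have : 0 < 2 / a := by positivity
    linarith
  have hlampos : 0 < lam := by linarith
  -- the H-estimate
  have hH : ∀ x y : X, ‖(dist x x₀ • f x : EuclideanSpace ℝ (Fin (m+1))) - dist y x₀ • f y‖ ≤
      (1 + 2 / a) * dist x y + δ₁ * dist y x₀ + 2 * R := by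
    intro x y
    have e1 : ‖(dist x x₀ • f x : EuclideanSpace ℝ (Fin (m+1))) - dist y x₀ • f y‖ ≤
        |dist x x₀ - dist y x₀| + dist y x₀ * ‖f x - f y‖ := by
      calc ‖(dist x x₀ • f x : EuclideanSpace ℝ (Fin (m+1))) - dist y x₀ • f y‖
          ≤ ‖(dist x x₀ • f x : EuclideanSpace ℝ (Fin (m+1))) - dist y x₀ • f x‖ +
            ‖(dist y x₀ • f x : EuclideanSpace ℝ (Fin (m+1))) - dist y x₀ • f y‖ :=
            norm_sub_le_norm_sub_add_norm_sub _ _ _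
        _ = |dist x x₀ - dist y x₀| + dist y x₀ * ‖f x - f y‖ := by
            rw [← sub_smul, ← smul_sub, norm_smul, norm_smul, Real.norm_eq_abs,
              Real.norm_eq_abs, hf1, mul_one, abs_of_nonneg dist_nonneg]
    have e2 : |dist x x₀ - dist y x₀| ≤ dist x y := abs_dist_sub_le _ _ _
    have e3 : dist y x₀ * ‖f x - f y‖ ≤ 2 / a * dist x y + δ₁ * dist y x₀ + 2 * R := by
      have hfxy2 : ‖f x - f y‖ ≤ 2 := by
        calc ‖f x - f y‖ ≤ ‖f x‖ + ‖f y‖ := norm_sub_le _ _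
          _ = 2 := by rw [hf1, hf1]; norm_num
      rcases lt_or_ge (dist y x₀) R with hyR | hyR
      · have : dist y x₀ * ‖f x - f y‖ ≤ R * 2 := by
          apply mul_le_mul (le_of_lt hyR) hfxy2 (norm_nonneg _) (by linarith)
        have h2a : 0 ≤ 2 / a * dist x y := by positivity
        have h2b : 0 ≤ δ₁ * dist y x₀ := by positivity
        linarith
      · rcases le_or_gt (dist x y) (a * dist y x₀) with hda | hda
        · have := hctrl x y hyR hda
          rw [dist_eq_norm] at this
          have : dist y x₀ * ‖f x - f y‖ ≤ dist y x₀ * δ₁ :=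
            mul_le_mul_of_nonneg_left this dist_nonneg
          have h2a : 0 ≤ 2 / a * dist x y := by positivity
          linarith [this, mul_comm (dist y x₀) δ₁]
        · have : a * (dist y x₀ * ‖f x - f y‖) ≤ 2 * dist x y := by
            calc a * (dist y x₀ * ‖f x - f y‖) ≤ a * (dist y x₀ * 2) := by
                  apply mul_le_mul_of_nonneg_left _ (le_of_lt hapos)
                  exact mul_le_mul_of_nonneg_left hfxy2 dist_nonneg
              _ = 2 * (a * dist y x₀) := by ring
              _ ≤ 2 * dist x y := by linarith
          have h2b : 0 ≤ δ₁ * dist y x₀ := by positivity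
          have hfin : dist y x₀ * ‖f x - f y‖ ≤ 2 / a * dist x y := by
            rw [div_mul_eq_mul_div, le_div_iff₀ hapos]
            nlinarith
          linarith
    calc ‖(dist x x₀ • f x : EuclideanSpace ℝ (Fin (m+1))) - dist y x₀ • f y‖
        ≤ |dist x x₀ - dist y x₀| + dist y x₀ * ‖f x - f y‖ := e1
      _ ≤ dist x y + (2 / a * dist x y + δ₁ * dist y x₀ + 2 * R) := add_le_add e2 e3
      _ = (1 + 2 / a) * dist x y + δ₁ * dist y x₀ + 2 * R := by ring
  have : Nonempty X := ⟨x₀⟩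
  -- coordinate facts
  have hfcoord : ∀ (x : X) j, |f x j| ≤ 1 := fun x j => by
    rw [← hf1 x]; exact abs_coord_le (f x) j
  have hHcoord : ∀ (x y : X) (j : Fin (m+1)),
      |dist x x₀ * f x j - dist y x₀ * f y j| ≤
        (1 + 2 / a) * dist x y + δ₁ * dist y x₀ + 2 * R := by
    intro x y j
    have h0 : |((dist x x₀ • f x : EuclideanSpace ℝ (Fin (m+1))) - dist y x₀ • f y) j| ≤
        ‖(dist x x₀ • f x : EuclideanSpace ℝ (Fin (m+1))) - dist y x₀ • f y‖ :=
      abs_coord_le _ j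
    exact le_trans h0 (hH x y)
  -- the inf-convolution
  set GE : X → EuclideanSpace ℝ (Fin (m+1)) :=
    fun x => WithLp.toLp 2 fun j => ⨅ y' : X, (dist y' x₀ * f y' j + lam * dist x y') with hGEdef
  have hGbdd : ∀ (x : X) (j : Fin (m+1)),
      BddBelow (Set.range fun y' : X => dist y' x₀ * f y' j + lam * dist x y') := by
    intro x j
    refine ⟨-dist x x₀, ?_⟩
    rintro v ⟨y', rfl⟩
    have h1 : |dist y' x₀ * f y' j| ≤ dist y' x₀ := by
      rw [abs_mul, abs_of_nonneg dist_nonneg]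
      calc dist y' x₀ * |f y' j| ≤ dist y' x₀ * 1 :=
            mul_le_mul_of_nonneg_left (hfcoord y' j) dist_nonneg
        _ = dist y' x₀ := mul_one _
    have h2 : dist y' x₀ ≤ dist x y' + dist x x₀ := by
      rw [dist_comm x y']; exact dist_triangle _ _ _
    have h3 : dist x y' ≤ lam * dist x y' := by
      have := mul_le_mul_of_nonneg_right (show (1:ℝ) ≤ lam by linarith)
        (dist_nonneg (x := x) (y := y'))
      linarith
    have h4 := neg_abs_le (dist y' x₀ * f y' j)
    simp only
    linarith
  have hGE_le : ∀ (x : X) (j : Fin (m+1)), GE x j ≤ dist x x₀ * f x j := by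
    intro x j
    have := ciInf_le (hGbdd x j) x
    simpa using this
  have hGE_ge : ∀ (x : X) (j : Fin (m+1)),
      dist x x₀ * f x j - (δ₁ * dist x x₀ + 2 * R) ≤ GE x j := by
    intro x j
    apply le_ciInf
    intro y'
    have h1 := hHcoord x y' j
    have h1' : dist x x₀ * f x j - dist y' x₀ * f y' j ≤
        (1 + 2 / a) * dist x y' + δ₁ * dist y' x₀ + 2 * R :=
      le_trans (le_abs_self _) h1
    have h2 : dist y' x₀ ≤ dist x y' + dist x x₀ := by
      rw [dist_comm x y']; exact dist_triangle _ _ _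
    have h3 : δ₁ * dist y' x₀ ≤ δ₁ * (dist x y' + dist x x₀) :=
      mul_le_mul_of_nonneg_left h2 (le_of_lt hδ₁pos)
    have h4 : δ₁ * dist x y' ≤ 2 * dist x y' := by
      have := mul_le_mul_of_nonneg_right (show δ₁ ≤ 2 by linarith)
        (dist_nonneg (x := x) (y := y'))
      linarith
    have hlameq : lam = 3 + 2 / a := hlamdef
    rw [hlameq]
    linarith [h1', h3, h4]
  have hGE_lip1 : ∀ (x z : X) (j : Fin (m+1)), GE x j ≤ GE z j + lam * dist x z := by
    intro x z j
    rw [← sub_le_iff_le_add]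
    apply le_ciInf
    intro y'
    have h1 := ciInf_le (hGbdd x j) y'
    have h2 : dist x y' ≤ dist x z + dist z y' := dist_triangle _ _ _
    have h3 : lam * dist x y' ≤ lam * (dist x z + dist z y') :=
      mul_le_mul_of_nonneg_left h2 (le_of_lt hlampos)
    simp only at h1 ⊢
    linarith
  have hGE_lipc : ∀ (x z : X) (j : Fin (m+1)), |GE x j - GE z j| ≤ lam * dist x z := by
    intro x z j
    rw [abs_sub_le_iff]
    constructor
    · linarith [hGE_lip1 x z j]
    · have := hGE_lip1 z x j
      rw [dist_comm z x] at this
      linarith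
  -- Euclidean estimates
  have hsqcast : Real.sqrt ((m + 1 : ℕ) : ℝ) = sq := by
    rw [hsqdef]; push_cast; ring_nf
  have hGH2 : ∀ x : X, ‖GE x - (dist x x₀ • f x : EuclideanSpace ℝ (Fin (m+1)))‖ ≤
      sq * (δ₁ * dist x x₀ + 2 * R) := by
    intro x
    rw [← hsqcast]
    apply norm_le_sqrt_mul
    · have : (0:ℝ) ≤ δ₁ * dist x x₀ := by positivity
      linarith
    · intro j
      have h1 := hGE_le x j
      have h2 := hGE_ge x j
      have : (GE x - (dist x x₀ • f x : EuclideanSpace ℝ (Fin (m+1)))) j =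
          GE x j - dist x x₀ * f x j := rfl
      rw [this, abs_le]
      constructor
      · linarith
      · have : (0:ℝ) ≤ δ₁ * dist x x₀ := by positivity
        linarith
  set L : ℝ := sq * lam with hLdef
  have hLpos : 0 < L := mul_pos hsqpos hlampos
  have hGlipE : ∀ x z : X, ‖GE x - GE z‖ ≤ L * dist x z := by
    intro x z
    have h0 : ‖GE x - GE z‖ ≤ Real.sqrt ((m + 1 : ℕ) : ℝ) * (lam * dist x z) := by
      apply norm_le_sqrt_mul
      · positivity
      · intro j
        exact hGE_lipc x z j
    rw [hsqcast] at h0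
    calc ‖GE x - GE z‖ ≤ sq * (lam * dist x z) := h0
      _ = L * dist x z := by rw [hLdef]; ring
  -- the cut-off radius
  set R₀ : ℝ := 2 * R / δ₁ with hR₀def
  have hR₀pos : 0 < R₀ := by rw [hR₀def]; positivity
  have hδ₂eq : 2 * sq * δ₁ = δ₀ / 4 := by
    rw [hδ₁def]
    field_simp
    ring
  have hnormH : ∀ x : X, ‖(dist x x₀ • f x : EuclideanSpace ℝ (Fin (m+1)))‖ = dist x x₀ := by
    intro x
    rw [norm_smul, Real.norm_eq_abs, abs_of_nonneg dist_nonneg, hf1, mul_one]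
  have hclose : ∀ x : X, R₀ ≤ dist x x₀ →
      ‖GE x - (dist x x₀ • f x : EuclideanSpace ℝ (Fin (m+1)))‖ ≤ δ₀ / 4 * dist x x₀ := by
    intro x hx
    have h2R : 2 * R ≤ δ₁ * dist x x₀ := by
      have : δ₁ * R₀ = 2 * R := by
        rw [hR₀def]; field_simp
      calc 2 * R = δ₁ * R₀ := this.symm
        _ ≤ δ₁ * dist x x₀ := mul_le_mul_of_nonneg_left hx (le_of_lt hδ₁pos)
    calc ‖GE x - (dist x x₀ • f x : EuclideanSpace ℝ (Fin (m+1)))‖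
        ≤ sq * (δ₁ * dist x x₀ + 2 * R) := hGH2 x
      _ ≤ sq * (δ₁ * dist x x₀ + δ₁ * dist x x₀) :=
          mul_le_mul_of_nonneg_left (by linarith) (le_of_lt hsqpos)
      _ = 2 * sq * δ₁ * dist x x₀ := by ring
      _ = δ₀ / 4 * dist x x₀ := by rw [hδ₂eq]
  have hδ₀8 : δ₀ / 4 ≤ 1 / 8 := by linarith
  have hAlb : ∀ x : X, R₀ ≤ dist x x₀ → dist x x₀ / 2 ≤ ‖GE x‖ := by
    intro x hx
    have h1 := hclose x hx
    have h2 : ‖(dist x x₀ • f x : EuclideanSpace ℝ (Fin (m+1)))‖ - ‖GE x‖ ≤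
        ‖GE x - (dist x x₀ • f x : EuclideanSpace ℝ (Fin (m+1)))‖ := by
      rw [norm_sub_rev]
      exact norm_sub_norm_le _ _
    rw [hnormH] at h2
    have hd0 : (0:ℝ) ≤ dist x x₀ := dist_nonneg
    have h3 := mul_le_mul_of_nonneg_right hδ₀8 hd0
    linarith
  have hAub : ∀ x : X, R₀ ≤ dist x x₀ → ‖GE x‖ ≤ 2 * dist x x₀ := by
    intro x hx
    have h1 := hclose x hx
    have h2 : ‖GE x‖ - ‖(dist x x₀ • f x : EuclideanSpace ℝ (Fin (m+1)))‖ ≤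
        ‖GE x - (dist x x₀ • f x : EuclideanSpace ℝ (Fin (m+1)))‖ := norm_sub_norm_le _ _
    rw [hnormH] at h2
    have hd0 : (0:ℝ) ≤ dist x x₀ := dist_nonneg
    have h3 := mul_le_mul_of_nonneg_right hδ₀8 hd0
    linarith
  have hApos : ∀ x : X, R₀ ≤ dist x x₀ → 0 < ‖GE x‖ := by
    intro x hx
    have := hAlb x hx
    have : (0:ℝ) < dist x x₀ / 2 := by linarith [lt_of_lt_of_le hR₀pos hx]
    linarith [hAlb x hx]
  -- define g
  set g : X → EuclideanSpace ℝ (Fin (m+1)) :=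
    fun x => if dist x x₀ < R₀ then f x else ‖GE x‖⁻¹ • GE x with hgdef
  have hgnorm : ∀ x, ‖g x‖ = 1 := by
    intro x
    rw [hgdef]
    simp only
    split_ifs with h
    · exact hf1 x
    · have hpos := hApos x (not_lt.mp h)
      rw [norm_smul, Real.norm_eq_abs, abs_of_pos (inv_pos.mpr hpos),
        inv_mul_cancel₀ (ne_of_gt hpos)]
  have hgapprox : ∀ x, ‖f x - g x‖ ≤ δ₀ := by
    intro x
    rw [hgdef]
    simp only
    split_ifs with h
    · simp [le_of_lt hδ₀pos]
    · have hx := not_lt.mp h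
      have hpos := hApos x hx
      have hppos : (0:ℝ) < dist x x₀ := lt_of_lt_of_le hR₀pos hx
      have hfx : f x = ‖(dist x x₀ • f x : EuclideanSpace ℝ (Fin (m+1)))‖⁻¹ •
          (dist x x₀ • f x : EuclideanSpace ℝ (Fin (m+1))) := by
        rw [hnormH, smul_smul, inv_mul_cancel₀ (ne_of_gt hppos), one_smul]
      rw [hfx, norm_sub_rev]
      have hkey := normalize_close (GE x) (dist x x₀ • f x : EuclideanSpace ℝ (Fin (m+1)))
        hpos (by rw [hnormH]; exact hppos)
      refine le_trans hkey ?_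
      have h1 := hclose x hx
      have h2 := hAlb x hx
      rw [div_le_iff₀ hpos]
      have h3 : 2 * ‖GE x - (dist x x₀ • f x : EuclideanSpace ℝ (Fin (m+1)))‖ ≤
          2 * (δ₀ / 4 * dist x x₀) := by linarith
      have h4 := mul_le_mul_of_nonneg_left h2 (le_of_lt hδ₀pos)
      linarith
  -- Lipschitz constant
  set Lam : ℝ := 2 * R₀ / ε + 6 * L + 12 with hLamdef
  have hLam0 : 0 ≤ Lam := by
    rw [hLamdef]
    have : (0:ℝ) ≤ 2 * R₀ / ε := by positivity
    linarith
  have haux : ∀ x y : X, dist x x₀ ≤ dist y x₀ →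
      ‖(dist x x₀ • g x : EuclideanSpace ℝ (Fin (m+1))) - dist y x₀ • g y‖ ≤
        Lam * dist x y := by
    intro x y hpq
    by_cases hxy : x = y
    · subst hxy
      simp [le_of_lt, mul_nonneg hLam0 dist_nonneg]
    have htε : ε ≤ dist x y := hsep x y hxy
    have ht0 : (0:ℝ) ≤ dist x y := dist_nonneg
    have hp0 : (0:ℝ) ≤ dist x x₀ := dist_nonneg
    have hq0 : (0:ℝ) ≤ dist y x₀ := dist_nonneg
    have htriv : ‖(dist x x₀ • g x : EuclideanSpace ℝ (Fin (m+1))) - dist y x₀ • g y‖ ≤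
        dist x x₀ + dist y x₀ := by
      calc ‖(dist x x₀ • g x : EuclideanSpace ℝ (Fin (m+1))) - dist y x₀ • g y‖
          ≤ ‖(dist x x₀ • g x : EuclideanSpace ℝ (Fin (m+1)))‖ + ‖(dist y x₀ • g y :
            EuclideanSpace ℝ (Fin (m+1)))‖ := norm_sub_le _ _
        _ = dist x x₀ + dist y x₀ := by
            rw [norm_smul, norm_smul, Real.norm_eq_abs, Real.norm_eq_abs, hgnorm, hgnorm,
              abs_of_nonneg hp0, abs_of_nonneg hq0, mul_one, mul_one]
    have hqpt : dist y x₀ ≤ dist x x₀ + dist x y := by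
      have := dist_triangle y x x₀
      rw [dist_comm y x] at this
      linarith
    have hR₀ε : 2 * R₀ ≤ 2 * R₀ / ε * dist x y := by
      rw [div_mul_eq_mul_div, le_div_iff₀ hε]
      have := mul_le_mul_of_nonneg_left htε (le_of_lt hR₀pos)
      linarith
    rcases lt_or_ge (dist y x₀) R₀ with hcase | hq
    · -- both small
      have hLam' : 2 * R₀ / ε * dist x y ≤ Lam * dist x y := by
        rw [hLamdef]
        have h6 : (0:ℝ) ≤ (6 * L + 12) * dist x y := mul_nonneg (by linarith) ht0
        linarith
      calc ‖(dist x x₀ • g x : EuclideanSpace ℝ (Fin (m+1))) - dist y x₀ • g y‖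
          ≤ dist x x₀ + dist y x₀ := htriv
        _ ≤ 2 * R₀ := by linarith
        _ ≤ 2 * R₀ / ε * dist x y := hR₀ε
        _ ≤ Lam * dist x y := hLam'
    rcases lt_or_ge (dist x x₀) R₀ with hcase2 | hp
    · -- mixed
      have hLam' : (2 * R₀ / ε + 1) * dist x y ≤ Lam * dist x y := by
        rw [hLamdef]
        have h6 : (0:ℝ) ≤ (6 * L + 11) * dist x y := mul_nonneg (by linarith) ht0
        linarith
      calc ‖(dist x x₀ • g x : EuclideanSpace ℝ (Fin (m+1))) - dist y x₀ • g y‖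
          ≤ dist x x₀ + dist y x₀ := htriv
        _ ≤ 2 * R₀ + dist x y := by linarith
        _ ≤ 2 * R₀ / ε * dist x y + dist x y := by linarith
        _ = (2 * R₀ / ε + 1) * dist x y := by ring
        _ ≤ Lam * dist x y := hLam'
    rcases le_or_gt (dist x x₀) (dist x y) with hcase3 | htp
    · -- far apart
      have hLam' : 3 * dist x y ≤ Lam * dist x y := by
        rw [hLamdef]
        have h5 : (0:ℝ) ≤ 2 * R₀ / ε := by positivity
        have h6 : (0:ℝ) ≤ (6 * L + 9) * dist x y := mul_nonneg (by linarith) ht0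
        have h7 : (0:ℝ) ≤ 2 * R₀ / ε * dist x y := mul_nonneg h5 ht0
        linarith
      calc ‖(dist x x₀ • g x : EuclideanSpace ℝ (Fin (m+1))) - dist y x₀ • g y‖
          ≤ dist x x₀ + dist y x₀ := htriv
        _ ≤ 3 * dist x y := by linarith
        _ ≤ Lam * dist x y := hLam'
    -- main case
    have hgx : g x = ‖GE x‖⁻¹ • GE x := by rw [hgdef]; simp only; rw [if_neg (not_lt.mpr hp)]
    have hgy : g y = ‖GE y‖⁻¹ • GE y := by rw [hgdef]; simp only; rw [if_neg (not_lt.mpr hq)]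
    set p := dist x x₀
    set q := dist y x₀
    set t := dist x y
    set u := GE x
    set v := GE y
    set A := ‖u‖ with hAdef
    set B := ‖v‖ with hBdef
    have hA1 : p / 2 ≤ A := hAlb x hp
    have hA2 : A ≤ 2 * p := hAub x hp
    have hB1 : q / 2 ≤ B := hAlb y hq
    have hB2 : B ≤ 2 * q := hAub y hq
    have hApos' : 0 < A := hApos x hp
    have hBpos' : 0 < B := hApos y hq
    have huv : ‖u - v‖ ≤ L * t := hGlipE x y
    have hq2p : q ≤ 2 * p := by linarith
    have habsq : |p - q| ≤ t := abs_dist_sub_le _ _ _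
    have habsBA : |B - A| ≤ L * t := by
      have h1 : |B - A| ≤ ‖v - u‖ := by
        rw [hAdef, hBdef]
        exact abs_norm_sub_norm_le v u
      rw [norm_sub_rev] at h1
      linarith
    rw [hgx, hgy, smul_smul, smul_smul]
    have hdecomp : (p * A⁻¹) • u - (q * B⁻¹) • v =
        (p * A⁻¹) • (u - v) + ((p * A⁻¹) - (q * B⁻¹)) • v := by
      rw [smul_sub, sub_smul]
      abel
    rw [hdecomp]
    have hn1 : ‖(p * A⁻¹) • (u - v)‖ ≤ p * A⁻¹ * (L * t) := by
      rw [norm_smul, Real.norm_eq_abs, abs_of_nonneg (by positivity)]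
      exact mul_le_mul_of_nonneg_left huv (by positivity)
    have hn2 : ‖((p * A⁻¹) - (q * B⁻¹)) • v‖ ≤ (t * (2 * q) + q * (L * t)) * A⁻¹ := by
      rw [norm_smul, Real.norm_eq_abs]
      have heq : p * A⁻¹ - q * B⁻¹ = (p * B - q * A) * A⁻¹ * B⁻¹ := by
        field_simp
      rw [heq, abs_mul, abs_mul, abs_of_pos (inv_pos.mpr hApos'),
        abs_of_pos (inv_pos.mpr hBpos')]
      have hBv : ‖v‖ = B := rfl
      rw [hBv]
      have hsimp : |p * B - q * A| * A⁻¹ * B⁻¹ * B = |p * B - q * A| * A⁻¹ := by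
        field_simp
      rw [hsimp]
      have hnum : |p * B - q * A| ≤ t * (2 * q) + q * (L * t) := by
        have he : p * B - q * A = (p - q) * B + q * (B - A) := by ring
        rw [he]
        calc |(p - q) * B + q * (B - A)| ≤ |(p - q) * B| + |q * (B - A)| := abs_add_le _ _
          _ = |p - q| * B + q * |B - A| := by
              rw [abs_mul, abs_mul, abs_of_nonneg (le_of_lt hBpos'), abs_of_nonneg hq0]
          _ ≤ t * (2 * q) + q * (L * t) := by
              apply add_le_add
              · calc |p - q| * B ≤ t * B := mul_le_mul_of_nonneg_right habsq (le_of_lt hBpos')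
                  _ ≤ t * (2 * q) := mul_le_mul_of_nonneg_left hB2 ht0
              · exact mul_le_mul_of_nonneg_left habsBA hq0
      exact mul_le_mul_of_nonneg_right hnum (by positivity)
    have htotal : p * A⁻¹ * (L * t) + (t * (2 * q) + q * (L * t)) * A⁻¹ ≤ (6 * L + 8) * t := by
      have hX : p * (L * t) + (t * (2 * q) + q * (L * t)) ≤ (6 * L + 8) * t * A := by
        have hh1 : q * (L * t) ≤ 2 * p * (L * t) :=
          mul_le_mul_of_nonneg_right hq2p (by positivity)
        have hh2 : q * t ≤ 2 * p * t := mul_le_mul_of_nonneg_right hq2p ht0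
        have hh3 : (6 * L + 8) * t * (p / 2) ≤ (6 * L + 8) * t * A :=
          mul_le_mul_of_nonneg_left hA1 (by positivity)
        have hh4 : (0:ℝ) ≤ L * t := mul_nonneg (le_of_lt hLpos) ht0
        linarith [hh1, hh2, hh3]
      have : (p * (L * t) + (t * (2 * q) + q * (L * t))) * A⁻¹ ≤ (6 * L + 8) * t := by
        rw [← div_eq_mul_inv, div_le_iff₀ hApos']
        exact hX
      calc p * A⁻¹ * (L * t) + (t * (2 * q) + q * (L * t)) * A⁻¹
          = (p * (L * t) + (t * (2 * q) + q * (L * t))) * A⁻¹ := by ring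
        _ ≤ (6 * L + 8) * t := this
    have hLam' : (6 * L + 8) * t ≤ Lam * t := by
      rw [hLamdef]
      have h5 : (0:ℝ) ≤ 2 * R₀ / ε := by positivity
      have h6 : (0:ℝ) ≤ 2 * R₀ / ε * t := mul_nonneg h5 ht0
      have h7 : (0:ℝ) ≤ 4 * t := by linarith
      linarith
    calc ‖(p * A⁻¹) • (u - v) + ((p * A⁻¹) - (q * B⁻¹)) • v‖
        ≤ ‖(p * A⁻¹) • (u - v)‖ + ‖((p * A⁻¹) - (q * B⁻¹)) • v‖ := norm_add_le _ _
      _ ≤ p * A⁻¹ * (L * t) + (t * (2 * q) + q * (L * t)) * A⁻¹ := add_le_add hn1 hn2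
      _ ≤ (6 * L + 8) * t := htotal
      _ ≤ Lam * t := hLam'
  refine ⟨g, hgnorm, hgapprox, Lam, hLam0, ?_⟩
  intro x y
  rw [dist_eq_norm]
  rcases le_total (dist x x₀) (dist y x₀) with hc | hc
  · exact haux x y hc
  · rw [norm_sub_rev, dist_comm x y]
    exact haux y x hc

theorem stmt_12 {X : Type*} [MetricSpace X] (x₀ : X)
    (hdisc : ∃ ε > 0, ∀ x y : X, x ≠ y → ε ≤ dist x y) (m : ℕ)
    (f : X → EuclideanSpace ℝ (Fin (m + 1))) (hf1 : ∀ x, ‖f x‖ = 1) :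
    HigsonSublinear x₀ f ↔
      ∀ δ > (0 : ℝ), ∃ g : X → EuclideanSpace ℝ (Fin (m + 1)),
        (∀ x, ‖g x‖ = 1) ∧ (∀ x, ‖f x - g x‖ ≤ δ) ∧
        LipFun (fun x : X => dist x x₀ • g x) := by
  exact ⟨forward_dir x₀ hdisc m f hf1, backward_dir x₀ m f hf1⟩
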